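/- For a prime p, positive integer r, and odd integer α, the Gauss sum of the quadratic form q(x) = α x²/2^{r+1} on ℤ/2^rℤ satisfies Θ(ℤ/2^rℤ, q) = (−1)^{r(α²−1)/8} · exp(2πi·α/8). -/

import Mathlib

noncomputable def qzExp (x : AddCircle (1 : ℚ)) : ℂ :=
  Complex.exp (2 * Real.pi * Complex.I * ((Quotient.out x : ℚ) : ℂ))

noncomputable def gSum (G : Type*) [AddCommGroup G] (q : G → AddCircle (1 : ℚ)) : ℂ :=
  (1 / Real.sqrt (Nat.card G)) * ∑ᶠ x : G, qzExp (q x)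

noncomputable def ee (z : ℂ) : ℂ := Complex.exp (2 * Real.pi * Complex.I * z)

lemma ee_add (a b : ℂ) : ee (a + b) = ee a * ee b := by
  simp [ee, mul_add, Complex.exp_add]

lemma ee_int (n : ℤ) : ee (n : ℂ) = 1 := by
  rw [ee, show 2 * (Real.pi:ℂ) * Complex.I * n = n * (2 * Real.pi * Complex.I) by ring,
    Complex.exp_int_mul_two_pi_mul_I]

lemma ee_half : ee (1/2) = -1 := by
  rw [ee, show 2 * (Real.pi:ℂ) * Complex.I * (1/2) = Real.pi * Complex.I by ring,
    Complex.exp_pi_mul_I]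

lemma ee_nat_half (y : ℕ) : ee ((y : ℂ)/2) = (-1) ^ y := by
  induction y with
  | zero => simp [ee]
  | succ n ih =>
    have : ((n+1 : ℕ) : ℂ)/2 = (n:ℂ)/2 + 1/2 := by push_cast; ring
    rw [this, ee_add, ih, ee_half, pow_succ]

lemma ee_odd_half (α : ℤ) (hα : Odd α) (y : ℕ) : ee ((α:ℂ) * y / 2) = (-1) ^ y := by
  obtain ⟨c, hc⟩ := hα
  have : (α:ℂ) * y / 2 = ((c * y : ℤ) : ℂ) + (y:ℂ)/2 := by rw [hc]; push_cast; ring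
  rw [this, ee_add, ee_int, one_mul, ee_nat_half]

lemma ee_odd_half' (α : ℤ) (hα : Odd α) : ee ((α:ℂ) / 2) = -1 := by
  obtain ⟨c, hc⟩ := hα
  have : (α:ℂ) / 2 = ((c : ℤ) : ℂ) + 1/2 := by rw [hc]; push_cast; ring
  rw [this, ee_add, ee_int, one_mul, ee_half]

lemma ee_eighth : ee (1/8) = (Real.sqrt 2 : ℂ)/2 + (Real.sqrt 2 : ℂ)/2 * Complex.I := by
  rw [ee, show 2 * (Real.pi:ℂ) * Complex.I * (1/8) = (↑(Real.pi/4)) * Complex.I by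
    push_cast; ring, Complex.exp_mul_I, ← Complex.ofReal_cos, ← Complex.ofReal_sin,
    Real.cos_pi_div_four, Real.sin_pi_div_four]
  push_cast
  ring

lemma ee_quarter : ee (1/4) = Complex.I := by
  have ht : ((Real.sqrt 2 : ℂ))^2 = 2 := by
    rw [← Complex.ofReal_pow, Real.sq_sqrt (by norm_num)]; norm_num
  rw [show (1:ℂ)/4 = 1/8 + 1/8 by norm_num, ee_add, ee_eighth]
  linear_combination (Complex.I/2) * ht + (((Real.sqrt 2 : ℂ))^2/4) * Complex.I_sq

lemma sum_range_two_mul (M : ℕ) (h : ℕ → ℂ) :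
    ∑ y ∈ Finset.range (2 * M), h y = ∑ z ∈ Finset.range M, (h (2*z) + h (2*z+1)) := by
  induction M with
  | zero => simp
  | succ n ih =>
    rw [Nat.mul_succ, Finset.sum_range_add, ih, Finset.sum_range_succ]
    simp [Finset.sum_range_succ, two_mul]

lemma zmod_sum (n : ℕ) [NeZero n] (f : ℕ → ℂ) :
    ∑ x : ZMod n, f (ZMod.val x) = ∑ k ∈ Finset.range n, f k := by
  apply Finset.sum_nbij' (fun x => ZMod.val x) (fun k => (k : ZMod n))
  · intro a _; exact Finset.mem_range.mpr (ZMod.val_lt a)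
  · intro k _; exact Finset.mem_univ _
  · intro a _; simp [ZMod.natCast_val, ZMod.cast_id]
  · intro k hk; exact ZMod.val_cast_of_lt (Finset.mem_range.mp hk)
  · intro a _; rfl

noncomputable def TT (α : ℤ) (r : ℕ) : ℂ :=
  ∑ k ∈ Finset.range (2^r), ee ((α:ℂ) * (k:ℂ)^2 / 2^(r+1))

lemma TT_rec (α : ℤ) (hα : Odd α) (s : ℕ) : TT α (s+3) = 2 * TT α (s+1) := by
  have h2 : (2:ℂ)^s ≠ 0 := pow_ne_zero _ two_ne_zero
  have keyA : ∀ y : ℕ, ee ((α:ℂ) * ((2^(s+2) + y : ℕ):ℂ)^2 / 2^(s+3+1))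
      = ee ((α:ℂ) * (y:ℂ)^2 / 2^(s+3+1)) * (-1)^y := by
    intro y
    have e1 : (α:ℂ) * ((2^(s+2) + y : ℕ):ℂ)^2 / 2^(s+3+1)
        = (α:ℂ)*(y:ℂ)^2/2^(s+3+1) + ((α:ℂ)*y/2 + ((α * 2^s : ℤ):ℂ)) := by
      push_cast
      rw [show s+3+1 = s+4 from rfl]
      rw [pow_add, pow_add]
      field_simp
      ring
    rw [e1, ee_add, ee_add, ee_int, mul_one, ee_odd_half α hα]
  have keyB : ∀ z : ℕ, ee ((α:ℂ) * (2*(z:ℂ))^2 / 2^(s+3+1))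
      = ee ((α:ℂ) * (z:ℂ)^2 / 2^(s+1+1)) := by
    intro z
    congr 1
    rw [show s+3+1 = (s+2)+2 from rfl, show s+1+1 = s+2 from rfl, pow_add]
    field_simp
  rw [TT, show (2:ℕ)^(s+3) = 2^(s+2) + 2^(s+2) by rw [pow_succ]; ring,
    Finset.sum_range_add]
  have : ∀ y ∈ Finset.range (2^(s+2)), ee ((α:ℂ) * ((2^(s+2) + y : ℕ):ℂ)^2 / 2^(s+3+1))
      = ee ((α:ℂ) * (y:ℂ)^2 / 2^(s+3+1)) * (-1)^y := fun y _ => keyA y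
  rw [Finset.sum_congr rfl this, ← Finset.sum_add_distrib]
  rw [show (2:ℕ)^(s+2) = 2 * 2^(s+1) by rw [pow_succ]; ring, sum_range_two_mul]
  rw [TT, Finset.mul_sum]
  apply Finset.sum_congr rfl
  intro z _
  have hodd : ((-1:ℂ))^(2*z) = 1 := by rw [pow_mul]; simp
  have hodd2 : ((-1:ℂ))^(2*z+1) = -1 := by rw [pow_succ, hodd, one_mul]
  push_cast [hodd, hodd2]
  rw [keyB z]
  ring

lemma sign_mod8 (α : ℤ) :
    (-1:ℂ) ^ ((α^2 - 1)/8) = (-1:ℂ) ^ (((α % 8)^2 - 1)/8) := by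
  set s := α % 8 with hs
  set m := α / 8 with hm
  have hα8 : α = 8 * m + s := by omega
  have heven : Even (α + s) := ⟨(α + s)/2, by omega⟩
  have hkey : α^2 - s^2 = 8*(m * (α + s)) := by rw [hα8]; ring
  have h1 : (α^2 - 1)/8 = (α^2 - s^2)/8 + (s^2-1)/8 := by
    rw [show α^2 - 1 = (α^2 - s^2) + (s^2 - 1) by ring,
      Int.add_ediv_of_dvd_left ⟨m * (α + s), hkey⟩]
  have h2 : (α^2 - s^2)/8 = m * (α + s) := by
    rw [hkey, Int.mul_ediv_cancel_left _ (by norm_num)]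
  obtain ⟨t, ht⟩ := heven
  rw [h1, zpow_add₀ (by norm_num : (-1:ℂ) ≠ 0), h2,
    show m * (α + s) = (α + s) * m by ring, zpow_mul, ht,
    show (t + t) = 2 * t by ring, zpow_mul]
  norm_num

lemma ee_mod8_div8 (α : ℤ) : ee ((α:ℂ)/8) = ee (((α % 8 : ℤ):ℂ)/8) := by
  have h8 : (α:ℂ) = 8 * ((α/8 : ℤ):ℂ) + ((α%8 : ℤ):ℂ) := by
    exact_mod_cast congrArg (Int.cast : ℤ → ℂ) (Int.mul_ediv_add_emod α 8).symm
  rw [show (α:ℂ)/8 = ((α % 8 : ℤ):ℂ)/8 + ((α/8:ℤ):ℂ) by linear_combination h8/8,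
    ee_add, ee_int, mul_one]

lemma ee_mod8_div4 (α : ℤ) : ee ((α:ℂ)/4) = ee (((α % 8 : ℤ):ℂ)/4) := by
  have h8 : (α:ℂ) = 8 * ((α/8 : ℤ):ℂ) + ((α%8 : ℤ):ℂ) := by
    exact_mod_cast congrArg (Int.cast : ℤ → ℂ) (Int.mul_ediv_add_emod α 8).symm
  rw [show (α:ℂ)/4 = ((α % 8 : ℤ):ℂ)/4 + (((2*(α/8)):ℤ):ℂ) by push_cast; linear_combination h8/4,
    ee_add, ee_int, mul_one]

lemma base1 (α : ℤ) (hα : Odd α) :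
    TT α 1 = (Real.sqrt (2^1) : ℂ) * ((-1:ℂ)^((1:ℤ) * ((α^2-1)/8)) * ee ((α:ℂ)/8)) := by
  have ht : ((Real.sqrt 2 : ℂ))^2 = 2 := by
    rw [← Complex.ofReal_pow, Real.sq_sqrt (by norm_num)]; norm_num
  rw [TT, show (2:ℕ)^1 = 2 by norm_num, Finset.sum_range_succ, Finset.sum_range_one]
  rw [show (α:ℂ) * ((0:ℕ):ℂ)^2 / 2^(1+1) = ((0:ℤ):ℂ) by push_cast; ring, ee_int]
  rw [show (α:ℂ) * ((1:ℕ):ℂ)^2 / 2^(1+1) = (α:ℂ)/4 by push_cast; ring]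
  rw [one_mul, sign_mod8, ee_mod8_div4, ee_mod8_div8]
  rw [show ((2:ℝ)^1) = 2 by norm_num]
  have hs4 : α % 8 = 1 ∨ α % 8 = 3 ∨ α % 8 = 5 ∨ α % 8 = 7 := by
    obtain ⟨c, hc⟩ := hα; omega
  rcases hs4 with hs | hs | hs | hs <;> rw [hs] <;> push_cast <;> norm_num
  · rw [ee_quarter, ee_eighth]
    linear_combination (-(1 + Complex.I)/2) * ht
  · rw [show (3:ℂ)/4 = 1/4 + 1/2 by norm_num, ee_add, ee_quarter, ee_half,
      show (3:ℂ)/8 = 1/8 + 1/4 by norm_num, ee_add, ee_quarter, ee_eighth]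
    linear_combination ((Complex.I - 1)/2) * ht + (1 - ((Real.sqrt 2:ℂ))^2/2) * Complex.I_sq + (((Real.sqrt 2:ℂ))^2 - 1) * Complex.I_sq
  · rw [show (5:ℂ)/4 = 1/4 + ((1:ℤ):ℂ) by push_cast; norm_num, ee_add, ee_quarter, ee_int,
      show (5:ℂ)/8 = 1/8 + 1/2 by norm_num, ee_add, ee_half, ee_eighth]
    linear_combination (-(1 + Complex.I)/2) * ht
  · rw [show (7:ℂ)/4 = 1/4 + 1/2 + ((1:ℤ):ℂ) by push_cast; norm_num, ee_add, ee_add,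
      ee_quarter, ee_half, ee_int,
      show (7:ℂ)/8 = 1/8 + 1/4 + 1/2 by norm_num, ee_add, ee_add, ee_quarter, ee_half, ee_eighth]
    linear_combination ((1 - Complex.I)/2) * ht + (((Real.sqrt 2:ℂ))^2/2 - 1) * Complex.I_sq + Complex.I_sq + (Complex.I - 1) * ht

lemma base2 (α : ℤ) (hα : Odd α) :
    TT α 2 = (Real.sqrt (2^2) : ℂ) * ((-1:ℂ)^((2:ℤ) * ((α^2-1)/8)) * ee ((α:ℂ)/8)) := by
  rw [TT, show (2:ℕ)^2 = 4 by norm_num, Finset.sum_range_succ, Finset.sum_range_succ,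
    Finset.sum_range_succ, Finset.sum_range_one]
  rw [show (α:ℂ) * ((0:ℕ):ℂ)^2 / 2^(2+1) = ((0:ℤ):ℂ) by push_cast; ring, ee_int]
  rw [show (α:ℂ) * ((1:ℕ):ℂ)^2 / 2^(2+1) = (α:ℂ)/8 by push_cast; ring]
  rw [show (α:ℂ) * ((2:ℕ):ℂ)^2 / 2^(2+1) = (α:ℂ)/2 by push_cast; ring, ee_odd_half' α hα]
  rw [show (α:ℂ) * ((3:ℕ):ℂ)^2 / 2^(2+1) = (α:ℂ) + (α:ℂ)/8 by push_cast; ring, ee_add, ee_int,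
    one_mul]
  rw [show ((2:ℝ)^2) = 4 by norm_num,
    show Real.sqrt 4 = 2 by rw [show (4:ℝ) = 2^2 by norm_num, Real.sqrt_sq (by norm_num)]]
  rw [zpow_mul]
  norm_num
  ring

lemma TT_main (α : ℤ) (hα : Odd α) :
    ∀ r, 1 ≤ r →
      TT α r = (Real.sqrt (2^r) : ℂ) * ((-1:ℂ)^((r:ℤ) * ((α^2-1)/8)) * ee ((α:ℂ)/8)) := by
  intro r
  induction r using Nat.strong_induction_on with
  | _ r ih =>
    intro hr
    match r, hr with
    | 1, _ => exact base1 α hα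
    | 2, _ => exact base2 α hα
    | (s+3), _ =>
      have IH := ih (s+1) (by omega) (by omega)
      rw [TT_rec α hα s, IH]
      have hsqrt : ((Real.sqrt (2^(s+3)) : ℝ) : ℂ) = 2 * ((Real.sqrt (2^(s+1)) : ℝ) : ℂ) := by
        rw [show (2:ℝ)^(s+3) = 2^2 * 2^(s+1) by ring,
          Real.sqrt_mul (by positivity), Real.sqrt_sq (by norm_num)]
        push_cast; ring
      have hsign : (-1:ℂ)^(((s+3:ℕ):ℤ)*((α^2-1)/8)) = (-1:ℂ)^(((s+1:ℕ):ℤ)*((α^2-1)/8)) := by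
        have h1 : (-1:ℂ)^(((α^2-1)/8)*2) = 1 := by
          rw [show ((α^2-1)/8)*2 = 2*((α^2-1)/8) by ring, zpow_mul]
          norm_num
        push_cast
        rw [show ((s:ℤ)+3)*((α^2-1)/8) = ((s:ℤ)+1)*((α^2-1)/8) + ((α^2-1)/8)*2 by ring,
          zpow_add₀ (by norm_num : (-1:ℂ) ≠ 0), h1, mul_one]
      rw [hsqrt, hsign]
      push_cast
      ring

/-- Gauss sum of q(x) = αx²/2^(r+1) on ℤ/2^rℤ. -/
theorem stmt8 (p : ℕ) (hp : p.Prime) (r : ℕ) (hr : 0 < r) (α : ℤ) (hα : Odd α)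
    (q : ZMod (2 ^ r) → AddCircle (1 : ℚ))
    (hq : ∀ x : ZMod (2 ^ r),
      q x = (((α : ℚ) * (x.val : ℚ) ^ 2 / 2 ^ (r + 1) : ℚ) : AddCircle (1 : ℚ))) :
    gSum (ZMod (2 ^ r)) q =
      (-1 : ℂ) ^ ((r : ℤ) * ((α ^ 2 - 1) / 8)) *
        Complex.exp (2 * Real.pi * Complex.I * ((α : ℂ) / 8)) := by
  haveI : NeZero (2^r) := ⟨by positivity⟩
  have hcoe : ∀ a : ℚ, qzExp ((a : AddCircle (1 : ℚ))) = ee (a : ℂ) := by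
    intro a
    set b : ℚ := (Quotient.out ((a : AddCircle (1:ℚ)))) with hb
    have h : ((b : ℚ) : AddCircle (1:ℚ)) = (a : AddCircle (1:ℚ)) := Quotient.out_eq _
    rw [QuotientAddGroup.eq, AddSubgroup.mem_zmultiples_iff] at h
    obtain ⟨k, hk⟩ := h
    have ha : a = b + (k : ℚ) := by
      simp only [zsmul_eq_mul, mul_one] at hk
      linarith [hk]
    rw [qzExp, ← hb, ha]
    push_cast
    rw [ee_add, ee_int, mul_one]
    rfl
  rw [gSum, finsum_eq_sum_of_fintype]
  have hterm : ∀ x : ZMod (2^r), qzExp (q x) = ee ((α:ℂ) * ((x.val : ℕ):ℂ)^2 / 2^(r+1)) := by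
    intro x
    rw [hq x, hcoe]
    congr 1
    push_cast
    ring
  rw [Finset.sum_congr rfl (fun x _ => hterm x)]
  have hsum : ∑ x : ZMod (2^r), ee ((α:ℂ) * ((x.val : ℕ):ℂ)^2 / 2^(r+1)) = TT α r := by
    rw [TT]
    exact zmod_sum (2^r) (fun k => ee ((α:ℂ) * (k:ℂ)^2 / 2^(r+1)))
  rw [hsum, TT_main α hα r hr]
  have hcard : ((Nat.card (ZMod (2^r)) : ℕ) : ℝ) = (2:ℝ)^r := by
    rw [Nat.card_zmod]; push_cast; ring
  rw [hcard]
  have hne : ((Real.sqrt ((2:ℝ)^r) : ℝ) : ℂ) ≠ 0 := by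
    simp only [ne_eq, Complex.ofReal_eq_zero]
    positivity
  rw [show ee ((α:ℂ)/8) = Complex.exp (2 * Real.pi * Complex.I * ((α : ℂ) / 8)) from rfl]
  field_simp
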